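/- arXiv:1804.07025 — 2 statements merged into one kernel-verified Lean document; each statement's English description precedes it below -/
import Mathlib

section
/- The limit as α → N⁻ of (α - N)/γ(α) equals -2/(π^{N/2}·2^N·Γ(N/2)), where γ(α) = π^{N/2} 2^α Γ(α/2)/Γ((N-α)/2). -/
open Real Filter

noncomputable section

/-- The Riesz potential normalization constant
`γ(α) = π^(N/2) 2^α Γ(α/2) / Γ((N-α)/2)`. -/
def rieszGamma (N : ℕ) (α : ℝ) : ℝ :=
  Real.pi ^ ((N : ℝ) / 2) * 2 ^ α * Real.Gamma (α / 2) / Real.Gamma (((N : ℝ) - α) / 2)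

theorem limit_gamma_at_N (N : ℕ) (hN : 1 ≤ N) :
    Tendsto (fun α : ℝ => (α - (N : ℝ)) / rieszGamma N α)
      (nhdsWithin (N : ℝ) (Set.Iio (N : ℝ)))
      (nhds (-2 / (Real.pi ^ ((N : ℝ) / 2) * 2 ^ (N : ℕ) * Real.Gamma ((N : ℝ) / 2)))) := by
  have hNpos : (0 : ℝ) < N := by exact_mod_cast hN
  -- numerator tendsto -2
  have hcont1 : ContinuousAt Real.Gamma 1 := by
    refine (Real.differentiableAt_Gamma ?_).continuousAt
    intro m
    have : (0:ℝ) < 1 := one_pos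
    intro h
    have : (0:ℝ) ≤ (m:ℝ) := m.cast_nonneg
    nlinarith [h]
  have hnum : Tendsto (fun α : ℝ => (α - (N : ℝ)) * Real.Gamma (((N : ℝ) - α) / 2))
      (nhdsWithin (N : ℝ) (Set.Iio (N : ℝ))) (nhds (-2)) := by
    have h1 : Tendsto (fun α : ℝ => ((N : ℝ) - α) / 2 + 1)
        (nhdsWithin (N : ℝ) (Set.Iio (N : ℝ))) (nhds 1) := by
      have : Tendsto (fun α : ℝ => ((N : ℝ) - α) / 2 + 1) (nhds (N : ℝ))
          (nhds (((N : ℝ) - N) / 2 + 1)) :=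
        (Continuous.tendsto (by continuity) _)
      simpa using this.mono_left nhdsWithin_le_nhds
    have h2 : Tendsto (fun α : ℝ => -2 * Real.Gamma (((N : ℝ) - α) / 2 + 1))
        (nhdsWithin (N : ℝ) (Set.Iio (N : ℝ))) (nhds (-2)) := by
      have := (hcont1.tendsto.comp h1).const_mul (-2 : ℝ)
      simpa [Real.Gamma_one] using this
    refine h2.congr' ?_
    filter_upwards [self_mem_nhdsWithin] with α (hα : α < (N : ℝ))
    have hpos : (0:ℝ) < ((N : ℝ) - α) / 2 := by linarith
    rw [Real.Gamma_add_one hpos.ne']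
    ring
  -- denominator
  have hden : Tendsto (fun α : ℝ => Real.pi ^ ((N : ℝ) / 2) * 2 ^ α * Real.Gamma (α / 2))
      (nhdsWithin (N : ℝ) (Set.Iio (N : ℝ)))
      (nhds (Real.pi ^ ((N : ℝ) / 2) * 2 ^ (N : ℕ) * Real.Gamma ((N : ℝ) / 2))) := by
    have hGc : ContinuousAt Real.Gamma ((N : ℝ) / 2) := by
      refine (Real.differentiableAt_Gamma ?_).continuousAt
      intro m h
      have : (0:ℝ) ≤ (m:ℝ) := m.cast_nonneg
      nlinarith [h]
    have h1 : Tendsto (fun α : ℝ => Real.pi ^ ((N : ℝ) / 2) * 2 ^ α * Real.Gamma (α / 2))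
        (nhds (N : ℝ))
        (nhds (Real.pi ^ ((N : ℝ) / 2) * 2 ^ (N : ℝ) * Real.Gamma ((N : ℝ) / 2))) := by
      have h2 : Tendsto (fun α : ℝ => (2:ℝ) ^ α) (nhds (N : ℝ)) (nhds ((2:ℝ) ^ (N : ℝ))) :=
        (Real.continuousAt_const_rpow (by norm_num : (2:ℝ) ≠ 0)).tendsto
      have h3 : Tendsto (fun α : ℝ => Real.Gamma (α / 2)) (nhds (N : ℝ))
          (nhds (Real.Gamma ((N : ℝ) / 2))) :=
        hGc.tendsto.comp (Continuous.tendsto (by continuity) _)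
      exact ((tendsto_const_nhds.mul h2).mul h3)
    rw [Real.rpow_natCast] at h1
    exact h1.mono_left nhdsWithin_le_nhds
  have hdne : Real.pi ^ ((N : ℝ) / 2) * 2 ^ (N : ℕ) * Real.Gamma ((N : ℝ) / 2) ≠ 0 := by
    have := Real.Gamma_pos_of_pos (by positivity : (0:ℝ) < (N : ℝ) / 2)
    have hpi := Real.pi_pos
    positivity
  have := hnum.div hden hdne
  refine this.congr ?_
  intro α
  simp only [Pi.div_apply]
  rw [rieszGamma, div_div_eq_mul_div]
end
end

section
/- Let N ≥ 3 and k ∈ ℕ with 1 ≤ k ≤ N. The function F(x) := (-1)^k div_k(|x|^{2k-N} ∇^k log|x|), defined for x ≠ 0, is identically zero on ℝ^N \ {0}; equivalently, the smooth function x ↦ ∑_{i_1,...,i_k} ∂^k/∂x_{i_1}...∂x_{i_k} (|x|^{2k-N} ∂^k log|x|/∂x_{i_1}...∂x_{i_k}) vanishes for all x ≠ 0. -/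
open Real Filter

noncomputable section

/-- The iterated mixed partial derivative `∂^k f/∂x_{i 0} ⋯ ∂x_{i (k-1)}` at `x`. -/
def pD {N : ℕ} (k : ℕ) (f : EuclideanSpace ℝ (Fin N) → ℝ) (i : Fin k → Fin N)
    (x : EuclideanSpace ℝ (Fin N)) : ℝ :=
  iteratedFDeriv ℝ k f x (fun j => EuclideanSpace.single (i j) 1)

namespace DivAux

variable {N : ℕ}

local notation "E" => EuclideanSpace ℝ (Fin N)

def Om (N : ℕ) : Set (EuclideanSpace ℝ (Fin N)) := {x | x ≠ 0}

lemma isOpen_Om : IsOpen (Om N) := isOpen_ne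

lemma om_mem_nhds {x : E} (hx : x ≠ 0) : Om N ∈ nhds x := isOpen_Om.mem_nhds hx

def sgl (j : Fin N) : E := EuclideanSpace.single j 1

def D (j : Fin N) (f : E → ℝ) : E → ℝ := fun x => fderiv ℝ f x (sgl j)

def PD : List (Fin N) → (E → ℝ) → E → ℝ
  | [], f => f
  | a :: L, f => D a (PD L f)

def Sm (f : E → ℝ) : Prop := ContDiffOn ℝ (⊤ : ℕ∞) f (Om N)

lemma Sm.cAt {f : E → ℝ} (hf : Sm f) {x : E} (hx : x ≠ 0) :
    ContDiffAt ℝ (⊤ : ℕ∞) f x :=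
  ContDiffOn.contDiffAt hf (om_mem_nhds hx)

lemma one_le_inf : (1 : WithTop ℕ∞) ≤ ((⊤ : ℕ∞) : WithTop ℕ∞) := by
  exact_mod_cast le_top

lemma Sm.diffAt {f : E → ℝ} (hf : Sm f) {x : E} (hx : x ≠ 0) :
    DifferentiableAt ℝ f x :=
  (hf.cAt hx).differentiableAt (ne_of_gt (lt_of_lt_of_le zero_lt_one one_le_inf))

lemma Sm.D {f : E → ℝ} (hf : Sm f) (j : Fin N) : Sm (D j f) := by
  have h1 : ContDiffOn ℝ (⊤ : ℕ∞) (fderiv ℝ f) (Om N) :=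
    ((contDiffOn_infty_iff_fderiv_of_isOpen isOpen_Om).1 hf).2
  exact h1.clm_apply contDiffOn_const

lemma Sm.PD {f : E → ℝ} (hf : Sm f) (L : List (Fin N)) : Sm (PD L f) := by
  induction L with
  | nil => exact hf
  | cons a L ih => exact ih.D a

lemma Sm.diffOn {f : E → ℝ} (hf : Sm f) : DifferentiableOn ℝ f (Om N) :=
  hf.differentiableOn (ne_of_gt (lt_of_lt_of_le zero_lt_one one_le_inf))

lemma D_congr {f g : E → ℝ} (h : ∀ y ∈ Om N, f y = g y) {x : E} (hx : x ≠ 0) (j : Fin N) :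
    D j f x = D j g x := by
  have he : f =ᶠ[nhds x] g := eventuallyEq_of_mem (om_mem_nhds hx) h
  unfold D
  rw [he.fderiv_eq]

lemma PD_congr (L : List (Fin N)) {f g : E → ℝ} (h : ∀ y ∈ Om N, f y = g y) :
    ∀ x, x ≠ 0 → PD L f x = PD L g x := by
  induction L with
  | nil => exact h
  | cons a L ih => exact fun x hx => D_congr (fun y hy => ih y hy) hx a

lemma D_apply_hasFDerivAt {f : E → ℝ} {f' : E →L[ℝ] ℝ} {x : E} (h : HasFDerivAt f f' x)
    (j : Fin N) : D j f x = f' (sgl j) := by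
  unfold D; rw [h.fderiv]

lemma D_add {f g : E → ℝ} {x : E} (hf : DifferentiableAt ℝ f x)
    (hg : DifferentiableAt ℝ g x) (j : Fin N) :
    D j (fun y => f y + g y) x = D j f x + D j g x := by
  rw [D_apply_hasFDerivAt (hf.hasFDerivAt.fun_add hg.hasFDerivAt)]
  rfl

lemma D_const_mul {f : E → ℝ} {x : E} (hf : DifferentiableAt ℝ f x) (c : ℝ) (j : Fin N) :
    D j (fun y => c * f y) x = c * D j f x := by
  rw [D_apply_hasFDerivAt (hf.hasFDerivAt.const_mul c)]
  rfl

lemma D_mul {f g : E → ℝ} {x : E} (hf : DifferentiableAt ℝ f x)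
    (hg : DifferentiableAt ℝ g x) (j : Fin N) :
    D j (fun y => f y * g y) x = D j f x * g x + f x * D j g x := by
  rw [D_apply_hasFDerivAt (hf.hasFDerivAt.fun_mul hg.hasFDerivAt)]
  simp [D]
  ring

lemma D_const (c : ℝ) (j : Fin N) (x : E) : D j (fun _ => c) x = 0 := by
  unfold D; rw [fderiv_fun_const]; rfl

lemma D_sum {ι : Type*} (s : Finset ι) {F : ι → E → ℝ} {x : E}
    (h : ∀ i ∈ s, DifferentiableAt ℝ (F i) x) (j : Fin N) :
    D j (fun y => ∑ i ∈ s, F i y) x = ∑ i ∈ s, D j (F i) x := by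
  unfold D
  rw [fderiv_fun_sum h]
  simp

lemma D_lin {u v w : E → ℝ} {x : E} (hu : DifferentiableAt ℝ u x)
    (hv : DifferentiableAt ℝ v x) (hw : DifferentiableAt ℝ w x) (c1 c2 : ℝ) (j : Fin N) :
    D j (fun y => u y + c1 * v y + c2 * w y) x = D j u x + c1 * D j v x + c2 * D j w x := by
  rw [D_apply_hasFDerivAt ((hu.hasFDerivAt.fun_add (hv.hasFDerivAt.const_mul c1)).fun_add
    (hw.hasFDerivAt.const_mul c2))]
  rfl

lemma PD_zero (L : List (Fin N)) : PD L (fun _ => (0:ℝ)) = fun _ => 0 := by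
  induction L with
  | nil => rfl
  | cons a L ih =>
    show D a (PD L fun _ => (0:ℝ)) = fun _ => 0
    rw [ih]
    funext x
    exact D_const 0 a x

lemma PD_one {L : List (Fin N)} (hL : L ≠ []) : PD L (fun _ => (1:ℝ)) = fun _ => 0 := by
  induction L with
  | nil => exact absurd rfl hL
  | cons a L ih =>
    show D a (PD L fun _ => (1:ℝ)) = fun _ => 0
    rcases L with _ | ⟨b, L'⟩
    · funext x; exact D_const 1 a x
    · rw [ih (by simp)]
      funext x
      exact D_const 0 a x

lemma PD_add (L : List (Fin N)) {f g : E → ℝ} (hf : Sm f) (hg : Sm g) :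
    ∀ x, x ≠ 0 → PD L (fun y => f y + g y) x = PD L f x + PD L g x := by
  induction L with
  | nil => intro x _; rfl
  | cons a L ih =>
    intro x hx
    have h1 : D a (PD L fun y => f y + g y) x
        = D a (fun y => PD L f y + PD L g y) x :=
      D_congr (fun y hy => ih y hy) hx a
    exact h1.trans (D_add ((hf.PD L).diffAt hx) ((hg.PD L).diffAt hx) a)

lemma PD_const_mul (L : List (Fin N)) {f : E → ℝ} (hf : Sm f) (c : ℝ) :
    ∀ x, x ≠ 0 → PD L (fun y => c * f y) x = c * PD L f x := by
  induction L with
  | nil => intro x _; rfl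
  | cons a L ih =>
    intro x hx
    have h1 : D a (PD L fun y => c * f y) x = D a (fun y => c * PD L f y) x :=
      D_congr (fun y hy => ih y hy) hx a
    exact h1.trans (D_const_mul ((hf.PD L).diffAt hx) c a)

lemma PD_lin (L : List (Fin N)) {u v w : E → ℝ} (hu : Sm u) (hv : Sm v) (hw : Sm w)
    (c1 c2 : ℝ) :
    ∀ x, x ≠ 0 → PD L (fun y => u y + c1 * v y + c2 * w y) x
      = PD L u x + c1 * PD L v x + c2 * PD L w x := by
  induction L with
  | nil => intro x _; rfl
  | cons a L ih =>
    intro x hx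
    have h1 : D a (PD L fun y => u y + c1 * v y + c2 * w y) x
        = D a (fun y => PD L u y + c1 * PD L v y + c2 * PD L w y) x :=
      D_congr (fun y hy => ih y hy) hx a
    exact h1.trans (D_lin ((hu.PD L).diffAt hx) ((hv.PD L).diffAt hx)
      ((hw.PD L).diffAt hx) c1 c2 a)

lemma PD_sum {ι : Type*} (s : Finset ι) (L : List (Fin N)) {F : ι → E → ℝ}
    (hF : ∀ i ∈ s, Sm (F i)) :
    ∀ x, x ≠ 0 → PD L (fun y => ∑ i ∈ s, F i y) x = ∑ i ∈ s, PD L (F i) x := by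
  induction L with
  | nil => intro x _; rfl
  | cons a L ih =>
    intro x hx
    have h1 : D a (PD L fun y => ∑ i ∈ s, F i y) x
        = D a (fun y => ∑ i ∈ s, PD L (F i) y) x :=
      D_congr (fun y hy => ih y hy) hx a
    exact h1.trans (D_sum s (fun i hi => ((hF i hi).PD L).diffAt hx) a)

lemma D_comm {f : E → ℝ} (hf : Sm f) (a b : Fin N) :
    ∀ x, x ≠ 0 → D a (D b f) x = D b (D a f) x := by
  intro x hx
  have hf' : ContDiffOn ℝ (⊤ : ℕ∞) (fderiv ℝ f) (Om N) :=
    ((contDiffOn_infty_iff_fderiv_of_isOpen isOpen_Om).1 hf).2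
  have hdf' : DifferentiableAt ℝ (fderiv ℝ f) x :=
    (hf'.contDiffAt (om_mem_nhds hx)).differentiableAt (ne_of_gt (lt_of_lt_of_le zero_lt_one one_le_inf))
  have heq : ∀ᶠ y in nhds x, HasFDerivAt f (fderiv ℝ f y) y :=
    eventually_of_mem (om_mem_nhds hx) (fun y hy => (hf.diffAt hy).hasFDerivAt)
  have hsym := second_derivative_symmetric_of_eventually heq hdf'.hasFDerivAt
    (sgl a) (sgl b)
  have h1 : ∀ u v : Fin N, D u (D v f) x = (fderiv ℝ (fderiv ℝ f) x (sgl u)) (sgl v) := by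
    intro u v
    show fderiv ℝ (fun y => fderiv ℝ f y (sgl v)) x (sgl u) = _
    rw [fderiv_clm_apply hdf' (differentiableAt_const _)]
    simp
  rw [h1 a b, h1 b a, hsym]

lemma D_PD_comm (L : List (Fin N)) {f : E → ℝ} (hf : Sm f) (j : Fin N) :
    ∀ x, x ≠ 0 → D j (PD L f) x = PD L (D j f) x := by
  induction L with
  | nil => intro x _; rfl
  | cons a L ih =>
    intro x hx
    have h1 : D j (D a (PD L f)) x = D a (D j (PD L f)) x :=
      D_comm (hf.PD L) j a x hx
    have h2 : D a (D j (PD L f)) x = D a (PD L (D j f)) x :=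
      D_congr (fun y hy => ih y hy) hx a
    exact h1.trans h2

lemma PD_append_singleton (L : List (Fin N)) (j : Fin N) (f : E → ℝ) :
    PD (L ++ [j]) f = PD L (D j f) := by
  induction L with
  | nil => rfl
  | cons a L ih =>
    show D a (PD (L ++ [j]) f) = D a (PD L (D j f))
    rw [ih]

/-! ### Coordinates, squared norm, radial powers -/

def X (j : Fin N) : E → ℝ := fun y => y j

lemma X_eq_proj (j : Fin N) : X j = fun y => (EuclideanSpace.proj (𝕜 := ℝ) j) y := rfl

lemma Sm.X (j : Fin N) : Sm (X (N := N) j) := by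
  rw [X_eq_proj]
  exact (EuclideanSpace.proj (𝕜 := ℝ) j).contDiff.contDiffOn

lemma X_diffAt (j : Fin N) (x : E) : DifferentiableAt ℝ (X j) x := by
  rw [X_eq_proj]
  exact (EuclideanSpace.proj (𝕜 := ℝ) j).differentiableAt

lemma X_hasFDerivAt (j : Fin N) (x : E) :
    HasFDerivAt (X j) (EuclideanSpace.proj (𝕜 := ℝ) j) x :=
  (EuclideanSpace.proj (𝕜 := ℝ) j).hasFDerivAt

lemma sgl_apply (i j : Fin N) : (sgl i) j = if j = i then (1:ℝ) else 0 :=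
  EuclideanSpace.single_apply i 1 j

lemma D_X (i j : Fin N) (x : E) : D j (X i) x = if i = j then (1:ℝ) else 0 := by
  rw [D_apply_hasFDerivAt (X_hasFDerivAt i x)]
  show (sgl j) i = _
  rw [sgl_apply]

def n2 : E → ℝ := fun y => ∑ j, X j y * X j y

lemma Sm.n2 : Sm (n2 (N := N)) := by
  apply ContDiffOn.sum
  intro j _
  exact (Sm.X j).mul (Sm.X j)

lemma n2_diffAt (x : E) : DifferentiableAt ℝ n2 x := by
  apply DifferentiableAt.fun_sum
  intro j _
  exact (X_diffAt j x).mul (X_diffAt j x)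

lemma D_n2 (j : Fin N) (x : E) : D j n2 x = 2 * X j x := by
  unfold n2
  rw [D_sum Finset.univ (F := fun i y => X i y * X i y) (fun i _ => (X_diffAt i x).mul (X_diffAt i x)) j]
  have : ∀ i, D j (fun y => X i y * X i y) x = (if i = j then (1:ℝ) else 0) * X i x
      + X i x * (if i = j then (1:ℝ) else 0) := by
    intro i
    rw [D_mul (X_diffAt i x) (X_diffAt i x) j, D_X]
  simp only [this]
  rw [Finset.sum_add_distrib]
  simp [Finset.sum_ite_eq, two_mul]

lemma n2_eq_norm (y : E) : n2 y = ‖y‖ ^ 2 := by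
  rw [EuclideanSpace.norm_eq, Real.sq_sqrt (by positivity)]
  unfold n2 X
  apply Finset.sum_congr rfl
  intro j _
  rw [Real.norm_eq_abs, sq_abs, sq]

lemma n2_pos {x : E} (hx : x ≠ 0) : 0 < n2 x := by
  rw [n2_eq_norm]
  exact pow_pos (norm_pos_iff.mpr hx) 2

def R (a : ℝ) : E → ℝ := fun y => n2 y ^ a

lemma Sm.R (a : ℝ) : Sm (R (N := N) a) := by
  intro x hx
  have h1 : ContDiffAt ℝ (⊤ : ℕ∞) (fun t : ℝ => t ^ a) (DivAux.n2 x) :=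
    Real.contDiffAt_rpow_const_of_ne (n2_pos hx).ne'
  exact (h1.comp x (Sm.n2.cAt hx)).contDiffWithinAt

lemma R_hasFDerivAt {x : E} (hx : x ≠ 0) (a : ℝ) :
    HasFDerivAt (R a) ((a * n2 x ^ (a - 1)) • (fderiv ℝ n2 x)) x := by
  have h1 : HasDerivAt (fun t : ℝ => t ^ a) (a * n2 x ^ (a - 1)) (n2 x) :=
    Real.hasDerivAt_rpow_const (Or.inl (n2_pos hx).ne')
  exact h1.comp_hasFDerivAt x (n2_diffAt x).hasFDerivAt

lemma R_diffAt {x : E} (hx : x ≠ 0) (a : ℝ) : DifferentiableAt ℝ (R a) x :=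
  (R_hasFDerivAt hx a).differentiableAt

lemma D_R {x : E} (hx : x ≠ 0) (a : ℝ) (j : Fin N) :
    D j (R a) x = 2 * a * (X j x * R (a - 1) x) := by
  rw [D_apply_hasFDerivAt (R_hasFDerivAt hx a)]
  have : (fderiv ℝ n2 x) (sgl j) = 2 * X j x := D_n2 j x
  simp only [ContinuousLinearMap.coe_smul', Pi.smul_apply, this, smul_eq_mul]
  show a * n2 x ^ (a - 1) * (2 * X j x) = _
  unfold R
  ring

lemma R_mul {x : E} (hx : x ≠ 0) (a b : ℝ) : R a x * R b x = R (a + b) x :=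
  (Real.rpow_add (n2_pos hx) a b).symm

lemma R_zero {x : E} (hx : x ≠ 0) : R 0 x = 1 := Real.rpow_zero _

lemma n2_mul_R {x : E} (hx : x ≠ 0) (b : ℝ) : n2 x * R b x = R (b + 1) x := by
  have h1 : n2 x = R 1 x := (Real.rpow_one _).symm
  rw [h1, R_mul hx, add_comm]

def lg : E → ℝ := fun y => 2⁻¹ * Real.log (n2 y)

lemma Sm.lg : Sm (lg (N := N)) := by
  intro x hx
  have h1 : ContDiffAt ℝ (⊤ : ℕ∞) Real.log (DivAux.n2 x) :=
    Real.contDiffAt_log.2 (n2_pos hx).ne'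
  exact (ContDiffAt.const_smul (2⁻¹ : ℝ) (h1.comp x (Sm.n2.cAt hx))).contDiffWithinAt

lemma lg_hasFDerivAt {x : E} (hx : x ≠ 0) :
    HasFDerivAt lg ((2⁻¹ * (n2 x)⁻¹) • (fderiv ℝ n2 x)) x := by
  have h1 : HasDerivAt Real.log (n2 x)⁻¹ (n2 x) := Real.hasDerivAt_log (n2_pos hx).ne'
  have h2 := (h1.comp_hasFDerivAt x (n2_diffAt x).hasFDerivAt).const_mul (2⁻¹ : ℝ)
  rwa [smul_smul] at h2

lemma lg_diffAt {x : E} (hx : x ≠ 0) : DifferentiableAt ℝ lg x :=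
  (lg_hasFDerivAt hx).differentiableAt

lemma D_lg {x : E} (hx : x ≠ 0) (j : Fin N) : D j lg x = X j x * R (-1) x := by
  rw [D_apply_hasFDerivAt (lg_hasFDerivAt hx)]
  have h1 : (fderiv ℝ n2 x) (sgl j) = 2 * X j x := D_n2 j x
  simp only [ContinuousLinearMap.coe_smul', Pi.smul_apply, h1, smul_eq_mul]
  have h2 : R (-1) x = (n2 x)⁻¹ := by
    show n2 x ^ (-1 : ℝ) = _
    rw [Real.rpow_neg_one]
  rw [h2]
  field_simp

/-! ### Euler operator and Laplacian -/

def Efn (f : E → ℝ) : E → ℝ := fun y => ∑ j, X j y * D j f y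

def Lap (f : E → ℝ) : E → ℝ := fun y => ∑ j, D j (D j f) y

lemma Sm.Efn {f : E → ℝ} (hf : Sm f) : Sm (DivAux.Efn f) := by
  apply ContDiffOn.sum
  intro j _
  exact (Sm.X j).mul (hf.D j)

lemma Sm.Lap {f : E → ℝ} (hf : Sm f) : Sm (DivAux.Lap f) := by
  apply ContDiffOn.sum
  intro j _
  exact (hf.D j).D j

lemma euler_comm (L : List (Fin N)) {f : E → ℝ} (hf : Sm f) :
    ∀ x, x ≠ 0 →
      ∑ j, X j x * PD L (D j f) x
        = PD L (Efn f) x - (L.length : ℝ) * PD L f x := by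
  induction L with
  | nil =>
    intro x hx
    simp [PD, Efn]
  | cons a L ih =>
    intro x hx
    have smPDj : ∀ j : Fin N, Sm (PD L (D j f)) := fun j => (hf.D j).PD L
    -- derivative of the function g := fun y => ∑ j, X j y * PD L (D j f) y
    have hg1 : D a (fun y => ∑ j, X j y * PD L (D j f) y) x
        = ∑ j, D a (fun y => X j y * PD L (D j f) y) x :=
      D_sum Finset.univ (fun j _ => (X_diffAt j x).mul ((smPDj j).diffAt hx)) a
    have hg2 : ∀ j, D a (fun y => X j y * PD L (D j f) y) x
        = (if j = a then (1:ℝ) else 0) * PD L (D j f) x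
          + X j x * PD (a :: L) (D j f) x := by
      intro j
      rw [D_mul (X_diffAt j x) ((smPDj j).diffAt hx) a, D_X]
      rfl
    -- the same function equals PD L (Efn f) - m * PD L f on Om
    have hg3 : D a (fun y => ∑ j, X j y * PD L (D j f) y) x
        = D a (fun y => PD L (Efn f) y + (-(L.length : ℝ)) * PD L f y) x := by
      apply D_congr (fun y hy => ?_) hx a
      rw [ih y hy]
      ring
    have hg4 : D a (fun y => PD L (Efn f) y + (-(L.length : ℝ)) * PD L f y) x
        = PD (a :: L) (Efn f) x + (-(L.length : ℝ)) * PD (a :: L) f x := by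
      rw [D_add ((hf.Efn.PD L).diffAt hx) (((hf.PD L).diffAt hx).const_mul _) a,
        D_const_mul ((hf.PD L).diffAt hx) _ a]
      rfl
    have key : ∑ j, ((if j = a then (1:ℝ) else 0) * PD L (D j f) x
          + X j x * PD (a :: L) (D j f) x)
        = PD (a :: L) (Efn f) x + (-(L.length : ℝ)) * PD (a :: L) f x := by
      rw [← Finset.sum_congr rfl (fun j _ => hg2 j), ← hg1, hg3, hg4]
    rw [Finset.sum_add_distrib] at key
    have hsimp : ∑ j, (if j = a then (1:ℝ) else 0) * PD L (D j f) x
        = PD L (D a f) x := by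
      simp [ite_mul]
    rw [hsimp] at key
    have hcomm : PD L (D a f) x = PD (a :: L) f x :=
      (D_PD_comm L hf a x hx).symm
    have : ∑ j, X j x * PD (a :: L) (D j f) x
        = PD (a :: L) (Efn f) x + (-(L.length : ℝ)) * PD (a :: L) f x
          - PD (a :: L) f x := by
      rw [← key, hcomm]; ring
    rw [this]
    simp
    ring

/-! ### Values of Lap and Efn on radial functions -/

lemma lap_R {x : E} (hx : x ≠ 0) (a : ℝ) :
    Lap (R a) x = 2 * a * ((N : ℝ) + 2 * a - 2) * R (a - 1) x := by
  unfold Lap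
  have h1 : ∀ j : Fin N, D j (D j (R a)) x
      = 2 * a * ((if j = j then (1:ℝ) else 0) * R (a - 1) x
          + X j x * (2 * (a - 1) * (X j x * R (a - 1 - 1) x))) := by
    intro j
    have hcg : D j (D j (R a)) x
        = D j (fun y => 2 * a * (X j y * R (a - 1) y)) x := by
      apply D_congr (fun y hy => D_R hy a j) hx j
    rw [hcg, D_const_mul (f := fun y => X j y * R (a - 1) y) ((X_diffAt j x).mul (R_diffAt hx (a - 1))) (2 * a) j,
      D_mul (X_diffAt j x) (R_diffAt hx (a - 1)) j, D_X, D_R hx (a - 1) j]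
  rw [Finset.sum_congr rfl (fun j _ => h1 j)]
  simp only [eq_self_iff_true, if_true]
  have hn2 : ∑ j, X j x * X j x = n2 x := rfl
  have expand : ∀ j : Fin N, 2 * a * ((1:ℝ) * R (a - 1) x
      + X j x * (2 * (a - 1) * (X j x * R (a - 1 - 1) x)))
      = 2 * a * R (a - 1) x + (2 * a * (2 * (a - 1)) * R (a - 1 - 1) x) * (X j x * X j x) := by
    intro j; ring
  rw [Finset.sum_congr rfl (fun j _ => expand j), Finset.sum_add_distrib,
    Finset.sum_const, ← Finset.mul_sum, hn2, Finset.card_univ, Fintype.card_fin,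
    nsmul_eq_mul]
  have hr : R (a - 1 - 1) x * n2 x = R (a - 1) x := by
    rw [mul_comm, n2_mul_R hx]
    norm_num
  linear_combination (4*a*(a-1)) * hr

lemma eul_R {x : E} (hx : x ≠ 0) (a : ℝ) : Efn (R a) x = 2 * a * R a x := by
  unfold Efn
  have h1 : ∀ j : Fin N, X j x * D j (R a) x
      = (2 * a * R (a - 1) x) * (X j x * X j x) := by
    intro j; rw [D_R hx a j]; ring
  rw [Finset.sum_congr rfl (fun j _ => h1 j), ← Finset.mul_sum]
  have hn2 : ∑ j, X j x * X j x = n2 x := rfl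
  rw [hn2]
  have : n2 x * R (a - 1) x = R a x := by
    rw [n2_mul_R hx]; norm_num
  rw [mul_assoc, mul_comm (R (a-1) x) (n2 x), this]

lemma lap_lg {x : E} (hx : x ≠ 0) :
    Lap lg x = ((N : ℝ) - 2) * R (-1) x := by
  unfold Lap
  have h1 : ∀ j : Fin N, D j (D j lg) x
      = (if j = j then (1:ℝ) else 0) * R (-1) x
          + X j x * (2 * (-1) * (X j x * R (-1 - 1) x)) := by
    intro j
    have hcg : D j (D j lg) x = D j (fun y => X j y * R (-1) y) x := by
      apply D_congr (fun y hy => D_lg hy j) hx j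
    rw [hcg, D_mul (X_diffAt j x) (R_diffAt hx (-1)) j, D_X, D_R hx (-1) j]
  rw [Finset.sum_congr rfl (fun j _ => h1 j)]
  simp only [eq_self_iff_true, if_true]
  have hn2 : ∑ j, X j x * X j x = n2 x := rfl
  have expand : ∀ j : Fin N, (1:ℝ) * R (-1) x
      + X j x * (2 * (-1) * (X j x * R (-1 - 1) x))
      = R (-1) x + (-2 * R (-1 - 1) x) * (X j x * X j x) := by
    intro j; ring
  rw [Finset.sum_congr rfl (fun j _ => expand j), Finset.sum_add_distrib,
    Finset.sum_const, ← Finset.mul_sum, hn2, Finset.card_univ, Fintype.card_fin,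
    nsmul_eq_mul]
  have hr : R (-1 - 1) x * n2 x = R (-1) x := by
    rw [mul_comm, n2_mul_R hx]
    norm_num
  linear_combination (-2 : ℝ) * hr

lemma eul_lg {x : E} (hx : x ≠ 0) : Efn lg x = 1 := by
  unfold Efn
  have h1 : ∀ j : Fin N, X j x * D j lg x = R (-1) x * (X j x * X j x) := by
    intro j; rw [D_lg hx j]; ring
  rw [Finset.sum_congr rfl (fun j _ => h1 j), ← Finset.mul_sum]
  have hn2 : ∑ j, X j x * X j x = n2 x := rfl
  rw [hn2, mul_comm, n2_mul_R hx]
  norm_num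
  exact R_zero hx

/-! ### The summed operator T -/

def T (k : ℕ) (g f : E → ℝ) (x : E) : ℝ :=
  ∑ i : Fin k → Fin N, PD (List.ofFn i) (fun y => g y * PD (List.ofFn i) f y) x

lemma T_zeroth (g f : E → ℝ) (x : E) : T 0 g f x = g x * f x := by
  unfold T
  rw [Fintype.sum_unique]
  rfl

def snocEquiv (m : ℕ) : ((Fin m → Fin N) × Fin N) ≃ (Fin (m+1) → Fin N) where
  toFun p := Fin.snoc p.1 p.2
  invFun i := (Fin.init i, i (Fin.last m))
  left_inv p := by
    refine Prod.ext ?_ ?_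
    · simp
    · simp
  right_inv i := by simp

lemma sum_snoc {m : ℕ} (F : (Fin (m+1) → Fin N) → ℝ) :
    ∑ i : Fin (m+1) → Fin N, F i
      = ∑ I : Fin m → Fin N, ∑ j : Fin N, F (Fin.snoc I j) := by
  have h1 : ∑ i : Fin (m+1) → Fin N, F i
      = ∑ p : (Fin m → Fin N) × Fin N, F (Fin.snoc p.1 p.2) :=
    (Fintype.sum_equiv (snocEquiv m) (fun p => F (Fin.snoc p.1 p.2)) F
      (fun p => rfl)).symm
  rw [h1]
  exact Fintype.sum_prod_type _

lemma ofFn_snoc {m : ℕ} (I : Fin m → Fin N) (j : Fin N) :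
    List.ofFn (Fin.snoc I j : Fin (m+1) → Fin N) = List.ofFn I ++ [j] := by
  rw [List.ofFn_succ', List.concat_eq_append]
  congr 1
  · congr 1
    funext q
    simp
  · rw [Fin.snoc_last]

lemma T_congr {k : ℕ} {g f1 f2 : E → ℝ} (h : ∀ y ∈ Om N, f1 y = f2 y) {x : E}
    (hx : x ≠ 0) : T k g f1 x = T k g f2 x := by
  unfold T
  apply Finset.sum_congr rfl
  intro i _
  apply PD_congr _ (fun y hy => ?_) x hx
  rw [PD_congr _ h y hy]

lemma T_const_mul {k : ℕ} {g f : E → ℝ} (hg : Sm g) (hf : Sm f) (c : ℝ) {x : E}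
    (hx : x ≠ 0) : T k g (fun y => c * f y) x = c * T k g f x := by
  unfold T
  rw [Finset.mul_sum]
  apply Finset.sum_congr rfl
  intro i _
  have h1 : ∀ y ∈ Om N, g y * PD (List.ofFn i) (fun z => c * f z) y
      = c * (g y * PD (List.ofFn i) f y) := by
    intro y hy
    rw [PD_const_mul _ hf c y hy]
    ring
  rw [PD_congr _ h1 x hx, PD_const_mul _ (hg.mul (hf.PD _)) c x hx]

lemma T_one {m : ℕ} (g : E → ℝ) {x : E} (hx : x ≠ 0) :
    T (m+1) g (fun _ => (1:ℝ)) x = 0 := by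
  unfold T
  apply Finset.sum_eq_zero
  intro i _
  have hne : List.ofFn i ≠ [] := by
    rw [List.ofFn_succ]
    exact List.cons_ne_nil _ _
  have h1 : (fun y => g y * PD (List.ofFn i) (fun _ => (1:ℝ)) y) = fun _ => (0:ℝ) := by
    funext y
    rw [PD_one hne]
    simp
  rw [h1, PD_zero]

lemma T_step (m : ℕ) (a : ℝ) {f : E → ℝ} (hf : Sm f) {x : E} (hx : x ≠ 0) :
    T (m+1) (R a) f x
      = T m (R a) (Lap f) x + (2*a) * T m (R (a-1)) (Efn f) x
        + (-(2*a*m)) * T m (R (a-1)) f x := by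
  unfold T
  rw [sum_snoc]
  have main : ∀ I : Fin m → Fin N,
      ∑ j : Fin N, PD (List.ofFn (Fin.snoc I j))
          (fun y => R a y * PD (List.ofFn (Fin.snoc I j)) f y) x
      = PD (List.ofFn I) (fun y => R a y * PD (List.ofFn I) (Lap f) y) x
        + (2*a) * PD (List.ofFn I) (fun y => R (a-1) y * PD (List.ofFn I) (Efn f) y) x
        + (-(2*a*m)) * PD (List.ofFn I) (fun y => R (a-1) y * PD (List.ofFn I) f y) x := by
    intro I
    set L := List.ofFn I with hL
    have hlen : L.length = m := by simp [hL]
    have h1 : ∀ j, PD (List.ofFn (Fin.snoc I j))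
        (fun y => R a y * PD (List.ofFn (Fin.snoc I j)) f y) x
        = PD L (D j (fun y => R a y * PD L (D j f) y)) x := by
      intro j
      rw [ofFn_snoc]
      simp only [PD_append_singleton]
      rfl
    have smj : ∀ j : Fin N, Sm (fun y => R a y * PD L (D j f) y) :=
      fun j => (Sm.R a).mul ((hf.D j).PD L)
    have h2 : ∑ j, PD L (D j (fun y => R a y * PD L (D j f) y)) x
        = PD L (fun y => ∑ j, D j (fun y' => R a y' * PD L (D j f) y') y) x :=
      (PD_sum Finset.univ L (fun j _ => (smj j).D j) x hx).symm
    have h3 : ∀ y ∈ Om N, (∑ j, D j (fun y' => R a y' * PD L (D j f) y') y)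
        = R a y * PD L (Lap f) y + (2*a) * (R (a-1) y * PD L (Efn f) y)
          + (-(2*a*(m:ℝ))) * (R (a-1) y * PD L f y) := by
      intro y hy
      have hy0 : y ≠ 0 := hy
      have e1 : ∀ j, D j (fun y' => R a y' * PD L (D j f) y') y
          = (2*a*(X j y * R (a-1) y)) * PD L (D j f) y
            + R a y * PD L (D j (D j f)) y := by
        intro j
        rw [D_mul (R_diffAt hy0 a) (((hf.D j).PD L).diffAt hy0) j, D_R hy0 a j,
          D_PD_comm L (hf.D j) j y hy0]
      rw [Finset.sum_congr rfl (fun j _ => e1 j), Finset.sum_add_distrib]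
      have e2 : ∑ j, R a y * PD L (D j (D j f)) y = R a y * PD L (Lap f) y := by
        rw [← Finset.mul_sum, ← PD_sum Finset.univ L (fun j _ => (hf.D j).D j) y hy0]
        rfl
      have e3 : ∑ j, (2*a*(X j y * R (a-1) y)) * PD L (D j f) y
          = 2*a* R (a-1) y * (PD L (Efn f) y - (m:ℝ) * PD L f y) := by
        have e4 : ∀ j, (2*a*(X j y * R (a-1) y)) * PD L (D j f) y
            = (2*a*R (a-1) y) * (X j y * PD L (D j f) y) := by
          intro j; ring
        rw [Finset.sum_congr rfl (fun j _ => e4 j), ← Finset.mul_sum,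
          euler_comm L hf y hy0, hlen]
      rw [e2, e3]
      ring
    have h4 : PD L (fun y => ∑ j, D j (fun y' => R a y' * PD L (D j f) y') y) x
        = PD L (fun y => (R a y * PD L (Lap f) y)
            + (2*a) * (R (a-1) y * PD L (Efn f) y)
            + (-(2*a*(m:ℝ))) * (R (a-1) y * PD L f y)) x :=
      PD_congr L h3 x hx
    have h5 := PD_lin L ((Sm.R a).mul (hf.Lap.PD L)) ((Sm.R (a-1)).mul (hf.Efn.PD L))
      ((Sm.R (a-1)).mul (hf.PD L)) (2*a) (-(2*a*(m:ℝ))) x hx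
    rw [Finset.sum_congr rfl (fun j _ => h1 j), h2, h4, h5]
  rw [Finset.sum_congr rfl (fun I _ => main I), Finset.sum_add_distrib,
    Finset.sum_add_distrib, ← Finset.mul_sum, ← Finset.mul_sum]

/-! ### The two vanishing lemmas -/

lemma lemA : ∀ (m : ℕ) (s : ℝ) {x : E}, x ≠ 0 →
    T (m+1) (R ((m : ℝ) + 1 - s - (N:ℝ)/2)) (R s) x = 0 := by
  intro m
  induction m with
  | zero =>
    intro s x hx
    have h0 : ((0:ℕ) : ℝ) + 1 - s - (N:ℝ)/2 = 1 - s - (N:ℝ)/2 := by norm_num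
    rw [h0, T_step 0 (1 - s - (N:ℝ)/2) (Sm.R s) hx, T_zeroth, T_zeroth, T_zeroth,
      lap_R hx s, eul_R hx s]
    have P := R_mul hx (1 - s - (N:ℝ)/2) (s-1)
    have Q := R_mul hx (1 - s - (N:ℝ)/2 - 1) s
    have hexp : (1 - s - (N:ℝ)/2) + (s-1) = (1 - s - (N:ℝ)/2 - 1) + s := by ring
    rw [hexp] at P
    push_cast
    linear_combination (2*s*((N:ℝ)+2*s-2)) * P + (4*(1 - s - (N:ℝ)/2)*s) * Q
  | succ m ih =>
    intro s x hx
    have hcast : ((m+1:ℕ) : ℝ) + 1 - s - (N:ℝ)/2 = (m:ℝ) + 2 - s - (N:ℝ)/2 := by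
      push_cast; ring
    rw [hcast]
    have t1 : T (m+1) (R ((m:ℝ) + 2 - s - (N:ℝ)/2)) (Lap (R s)) x = 0 := by
      rw [T_congr (fun y hy => lap_R hy s) hx,
        T_const_mul (Sm.R ((m:ℝ) + 2 - s - (N:ℝ)/2)) (Sm.R (s-1)) _ hx]
      have he : (m:ℝ) + 2 - s - (N:ℝ)/2 = (m:ℝ) + 1 - (s-1) - (N:ℝ)/2 := by ring
      rw [he, ih (s-1) hx, mul_zero]
    have t2 : T (m+1) (R ((m:ℝ) + 2 - s - (N:ℝ)/2 - 1)) (Efn (R s)) x = 0 := by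
      rw [T_congr (fun y hy => eul_R hy s) hx,
        T_const_mul (Sm.R ((m:ℝ) + 2 - s - (N:ℝ)/2 - 1)) (Sm.R s) _ hx]
      have he : (m:ℝ) + 2 - s - (N:ℝ)/2 - 1 = (m:ℝ) + 1 - s - (N:ℝ)/2 := by ring
      rw [he, ih s hx, mul_zero]
    have t3 : T (m+1) (R ((m:ℝ) + 2 - s - (N:ℝ)/2 - 1)) (R s) x = 0 := by
      have he : (m:ℝ) + 2 - s - (N:ℝ)/2 - 1 = (m:ℝ) + 1 - s - (N:ℝ)/2 := by ring
      rw [he]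
      exact ih s hx
    rw [T_step (m+1) ((m:ℝ) + 2 - s - (N:ℝ)/2) (Sm.R s) hx, t1, t2, t3]
    ring

lemma lemB : ∀ (m : ℕ) {x : E}, x ≠ 0 →
    T (m+1) (R ((m : ℝ) + 1 - (N:ℝ)/2)) lg x = 0 := by
  intro m
  induction m with
  | zero =>
    intro x hx
    have h0 : ((0:ℕ) : ℝ) + 1 - (N:ℝ)/2 = 1 - (N:ℝ)/2 := by norm_num
    rw [h0, T_step 0 (1 - (N:ℝ)/2) Sm.lg hx, T_zeroth, T_zeroth, T_zeroth,
      lap_lg hx, eul_lg hx]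
    have Q := R_mul hx (1 - (N:ℝ)/2) (-1)
    have hexp : (1 - (N:ℝ)/2) + (-1 : ℝ) = 1 - (N:ℝ)/2 - 1 := by ring
    rw [hexp] at Q
    push_cast
    linear_combination ((N:ℝ)-2) * Q
  | succ m ih =>
    intro x hx
    have hcast : ((m+1:ℕ) : ℝ) + 1 - (N:ℝ)/2 = (m:ℝ) + 2 - (N:ℝ)/2 := by
      push_cast; ring
    rw [hcast]
    have t1 : T (m+1) (R ((m:ℝ) + 2 - (N:ℝ)/2)) (Lap lg) x = 0 := by
      rw [T_congr (fun y hy => lap_lg hy) hx,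
        T_const_mul (Sm.R ((m:ℝ) + 2 - (N:ℝ)/2)) (Sm.R (-1)) _ hx]
      have he : (m:ℝ) + 2 - (N:ℝ)/2 = (m:ℝ) + 1 - (-1 : ℝ) - (N:ℝ)/2 := by ring
      rw [he, lemA m (-1) hx, mul_zero]
    have t2 : T (m+1) (R ((m:ℝ) + 2 - (N:ℝ)/2 - 1)) (Efn lg) x = 0 := by
      rw [T_congr (fun y hy => eul_lg hy) hx]
      exact T_one _ hx
    have t3 : T (m+1) (R ((m:ℝ) + 2 - (N:ℝ)/2 - 1)) lg x = 0 := by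
      have he : (m:ℝ) + 2 - (N:ℝ)/2 - 1 = (m:ℝ) + 1 - (N:ℝ)/2 := by ring
      rw [he]
      exact ih hx
    rw [T_step (m+1) ((m:ℝ) + 2 - (N:ℝ)/2) Sm.lg hx, t1, t2, t3]
    ring

lemma pD_eq_PD : ∀ (k : ℕ) (f : E → ℝ), Sm f → ∀ (i : Fin k → Fin N) (x : E), x ≠ 0 →
    pD k f i x = PD (List.ofFn i) f x := by
  intro k
  induction k with
  | zero =>
    intro f _ i x _
    show iteratedFDeriv ℝ 0 f x _ = PD (List.ofFn i) f x
    rw [iteratedFDeriv_zero_apply, List.ofFn_zero]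
    rfl
  | succ k ih =>
    intro f hf i x hx
    have hd1 : ContDiffAt ℝ 1 (iteratedFDeriv ℝ k f) x :=
      (hf.cAt hx).iteratedFDeriv_right (by exact_mod_cast le_top)
    have hdiff : DifferentiableAt ℝ (iteratedFDeriv ℝ k f) x :=
      hd1.differentiableAt one_ne_zero
    have step : pD (k+1) f i x
        = fderiv ℝ (fun y => iteratedFDeriv ℝ k f y (fun j => sgl (Fin.tail i j))) x
            (sgl (i 0)) := by
      show iteratedFDeriv ℝ (k+1) f x (fun j => sgl (i j)) = _
      rw [iteratedFDeriv_succ_apply_left]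
      exact (fderiv_continuousMultilinear_apply_const_apply hdiff
        (fun j => sgl (Fin.tail i j)) (sgl (i 0))).symm
    have congrIH : fderiv ℝ (fun y => iteratedFDeriv ℝ k f y (fun j => sgl (Fin.tail i j))) x
          (sgl (i 0))
        = fderiv ℝ (PD (List.ofFn (Fin.tail i)) f) x (sgl (i 0)) := by
      have he : (fun y => iteratedFDeriv ℝ k f y (fun j => sgl (Fin.tail i j)))
          =ᶠ[nhds x] PD (List.ofFn (Fin.tail i)) f :=
        eventuallyEq_of_mem (om_mem_nhds hx) (fun y hy => ih f hf (Fin.tail i) y hy)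
      rw [he.fderiv_eq]
    rw [step, congrIH, List.ofFn_succ]
    rfl


end DivAux

theorem divk_log_vanishes (N k : ℕ) (hN : 3 ≤ N) (hk1 : 1 ≤ k) (hkN : k ≤ N)
    (x : EuclideanSpace ℝ (Fin N)) (hx : x ≠ 0) :
    (-1 : ℝ) ^ k *
      ∑ i : Fin k → Fin N,
        pD k (fun z : EuclideanSpace ℝ (Fin N) =>
          ‖z‖ ^ (2 * (k : ℝ) - (N : ℝ)) *
            pD k (fun w : EuclideanSpace ℝ (Fin N) => Real.log ‖w‖) i z) i x
      = 0 := by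
  obtain ⟨m, rfl⟩ : ∃ m, k = m + 1 := ⟨k - 1, (Nat.succ_pred_eq_of_pos hk1).symm⟩
  have hlg : (fun w : EuclideanSpace ℝ (Fin N) => Real.log ‖w‖) = DivAux.lg := by
    funext w
    show Real.log ‖w‖ = 2⁻¹ * Real.log (DivAux.n2 w)
    rw [DivAux.n2_eq_norm, Real.log_pow]
    push_cast
    ring
  have hR : ∀ z : EuclideanSpace ℝ (Fin N),
      ‖z‖ ^ (2 * ((m+1 : ℕ) : ℝ) - (N : ℝ)) = DivAux.R ((m:ℝ) + 1 - (N:ℝ)/2) z := by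
    intro z
    show _ = DivAux.n2 z ^ ((m:ℝ) + 1 - (N:ℝ)/2)
    rw [DivAux.n2_eq_norm, ← Real.rpow_natCast ‖z‖ 2, ← Real.rpow_mul (norm_nonneg z)]
    congr 1
    push_cast
    ring
  rw [hlg]
  have key : ∀ i : Fin (m+1) → Fin N,
      pD (m+1) (fun z : EuclideanSpace ℝ (Fin N) =>
          ‖z‖ ^ (2 * ((m+1 : ℕ) : ℝ) - (N : ℝ)) * pD (m+1) DivAux.lg i z) i x
      = DivAux.PD (List.ofFn i)
          (fun y => DivAux.R ((m:ℝ) + 1 - (N:ℝ)/2) y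
            * DivAux.PD (List.ofFn i) DivAux.lg y) x := by
    intro i
    have hfun : ∀ y ∈ DivAux.Om N,
        (‖y‖ ^ (2 * ((m+1 : ℕ) : ℝ) - (N : ℝ)) * pD (m+1) DivAux.lg i y)
        = DivAux.R ((m:ℝ) + 1 - (N:ℝ)/2) y * DivAux.PD (List.ofFn i) DivAux.lg y := by
      intro y hy
      rw [hR y, DivAux.pD_eq_PD (m+1) DivAux.lg DivAux.Sm.lg i y hy]
    have hsm : DivAux.Sm (fun z : EuclideanSpace ℝ (Fin N) =>
        ‖z‖ ^ (2 * ((m+1 : ℕ) : ℝ) - (N : ℝ)) * pD (m+1) DivAux.lg i z) :=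
      ContDiffOn.congr ((DivAux.Sm.R ((m:ℝ) + 1 - (N:ℝ)/2)).mul
        (DivAux.Sm.lg.PD (List.ofFn i))) hfun
    rw [DivAux.pD_eq_PD (m+1) _ hsm i x hx]
    exact DivAux.PD_congr (List.ofFn i) hfun x hx
  rw [Finset.sum_congr rfl (fun i _ => key i)]
  have hB := DivAux.lemB m hx
  unfold DivAux.T at hB
  rw [hB, mul_zero]
end
end
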